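/- The category W of W-semigroups has coequalizers: for any two W-morphisms φ, ψ : S → T between W-semigroups there exist a W-semigroup L and a W-morphism η : T → L with η ∘ φ = η ∘ ψ, such that for every W-semigroup R and every W-morphism h : T → R with h ∘ φ = h ∘ ψ there is a unique W-morphism h̃ : L → R with h̃ ∘ η = h. -/

import Mathlib

/-!
STATEMENT 5: The category W of W-semigroups has coequalizers: for any two
W-morphisms φ, ψ : S → T there exist a W-semigroup L and a W-morphism η : T → L with
η ∘ φ = η ∘ ψ, such that for every W-semigroup R and W-morphism h : T → R with
h ∘ φ = h ∘ ψ there is a unique W-morphism h̃ : L → R with h̃ ∘ η = h.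
-/

universe u v w

/-- The axioms of a `W`-semigroup: a commutative monoid with a transitive
auxiliary relation `≺` satisfying `0 ≺ x`, (W1), (W3) and (W4). -/
structure WAxioms (M : Type u) [AddCommMonoid M] (r : M → M → Prop) : Prop where
  trans : ∀ {x y z : M}, r x y → r y z → r x z
  zero_rel : ∀ x : M, r 0 x
  W1 : ∀ x : M, ∃ s : ℕ → M, (∀ n, r (s n) (s (n + 1))) ∧ (∀ n, r (s n) x) ∧
        ∀ y : M, r y x → ∃ n, r y (s n)
  W3 : ∀ {x' x y' y : M}, r x' x → r y' y → r (x' + y') (x + y)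
  W4 : ∀ {x y z : M}, r x (y + z) → ∃ y' z' : M, r y' y ∧ r z' z ∧ r x (y' + z')

/-- A `W`-morphism: preserves addition, `0` and the auxiliary relation, and is
continuous: whenever `y ≺ f x` there is `x' ≺ x` with `y ≺ f x'`. -/
structure IsWHom {M : Type u} {N : Type v} [AddCommMonoid M] [AddCommMonoid N]
    (rM : M → M → Prop) (rN : N → N → Prop) (f : M → N) : Prop where
  map_zero : f 0 = 0
  map_add : ∀ x y : M, f (x + y) = f x + f y
  map_rel : ∀ {x y : M}, rM x y → rN (f x) (f y)
  cont : ∀ (x : M) (y : N), rN y (f x) → ∃ x' : M, rM x' x ∧ rN y (f x')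

theorem WAxioms.transitive {M : Type u} [AddCommMonoid M] {r : M → M → Prop}
    (h : WAxioms M r) : Transitive r := fun _ _ _ hxy hyz => h.trans hxy hyz

theorem isWHom_id {M : Type u} [AddCommMonoid M] {r : M → M → Prop} (h : WAxioms M r) :
    IsWHom r r (id : M → M) := by
  refine ⟨rfl, fun _ _ => rfl, fun hxy => hxy, ?_⟩
  intro x y hyx
  obtain ⟨s, _, hsx, hcof⟩ := h.W1 x
  obtain ⟨n, hn⟩ := hcof y hyx
  exact ⟨s n, hsx n, hn⟩

theorem IsWHom.comp {M : Type u} {N : Type v} {P : Type w} [AddCommMonoid M]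
    [AddCommMonoid N] [AddCommMonoid P] {rM : M → M → Prop} {rN : N → N → Prop}
    {rP : P → P → Prop} (hP : Transitive rP) {g : N → P} {f : M → N}
    (hg : IsWHom rN rP g) (hf : IsWHom rM rN f) : IsWHom rM rP (g ∘ f) := by
  refine ⟨?_, ?_, ?_, ?_⟩
  · show g (f 0) = 0
    rw [hf.map_zero, hg.map_zero]
  · intro x y
    show g (f (x + y)) = g (f x) + g (f y)
    rw [hf.map_add, hg.map_add]
  · exact fun hxy => hg.map_rel (hf.map_rel hxy)
  · intro x y hy
    obtain ⟨u, hu, hyu⟩ := hg.cont (f x) y hy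
    obtain ⟨x', hx', hux'⟩ := hf.cont x u hu
    exact ⟨x', hx', hP hyu (hg.map_rel hux')⟩

/-- The category `W` of `W`-semigroups: objects are `W`-semigroups, morphisms are
`W`-morphisms. -/
structure WCat : Type (u + 1) where
  carrier : Type u
  [addCommMonoid : AddCommMonoid carrier]
  rel : carrier → carrier → Prop
  ax : WAxioms carrier rel

attribute [instance] WCat.addCommMonoid

instance : CategoryTheory.Category WCat.{u} where
  Hom S T := { f : S.carrier → T.carrier // IsWHom S.rel T.rel f }
  id S := ⟨id, isWHom_id S.ax⟩
  comp := fun {X Y Z} f g =>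
    ⟨g.1 ∘ f.1, g.2.comp Z.ax.transitive f.2⟩

open CategoryTheory

namespace WCoeq

theorem interp {M : Type u} [AddCommMonoid M] {r : M → M → Prop} (hax : WAxioms M r)
    {a b : M} (h : r a b) : ∃ m, r a m ∧ r m b := by
  obtain ⟨s, _, hsb, hcof⟩ := hax.W1 b
  obtain ⟨n, hn⟩ := hcof a h
  exact ⟨s n, hn, hsb n⟩

variable {S T : WCat.{u}} (φ ψ : S ⟶ T)

/-- one step of the congruence generated by `φ = ψ`. -/
def CStep (a b : T.carrier) : Prop :=
  ∃ c s, (a = c + φ.1 s ∧ b = c + ψ.1 s) ∨ (a = c + ψ.1 s ∧ b = c + φ.1 s)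

/-- the monoid congruence generated by `φ = ψ`. -/
def CE : T.carrier → T.carrier → Prop := Relation.ReflTransGen (CStep φ ψ)

theorem CStep.symm' {a b : T.carrier} (h : CStep φ ψ a b) : CStep φ ψ b a := by
  obtain ⟨c, s, h | h⟩ := h
  · exact ⟨c, s, Or.inr ⟨h.2, h.1⟩⟩
  · exact ⟨c, s, Or.inl ⟨h.2, h.1⟩⟩

theorem CE.refl' (a : T.carrier) : CE φ ψ a a := Relation.ReflTransGen.refl

theorem CE.symm' {a b : T.carrier} (h : CE φ ψ a b) : CE φ ψ b a :=
  by
    induction h with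
    | refl => exact Relation.ReflTransGen.refl
    | tail _ b c => exact Relation.ReflTransGen.head (CStep.symm' φ ψ b) c

theorem CE.trans' {a b c : T.carrier} (h : CE φ ψ a b) (h' : CE φ ψ b c) : CE φ ψ a c :=
  Relation.ReflTransGen.trans h h'

theorem CStep.add_right {a b : T.carrier} (d : T.carrier) (h : CStep φ ψ a b) :
    CStep φ ψ (a + d) (b + d) := by
  obtain ⟨c, s, ⟨h1, h2⟩ | ⟨h1, h2⟩⟩ := h
  · exact ⟨c + d, s, Or.inl ⟨by rw [h1]; abel, by rw [h2]; abel⟩⟩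
  · exact ⟨c + d, s, Or.inr ⟨by rw [h1]; abel, by rw [h2]; abel⟩⟩

theorem CE.add_right {a b : T.carrier} (d : T.carrier) (h : CE φ ψ a b) :
    CE φ ψ (a + d) (b + d) :=
  Relation.ReflTransGen.lift (· + d) (fun _ _ h => CStep.add_right φ ψ d h) _ _ h

theorem CE.add {a a' b b' : T.carrier} (h : CE φ ψ a a') (h' : CE φ ψ b b') :
    CE φ ψ (a + b) (a' + b') := by
  refine CE.trans' φ ψ (CE.add_right φ ψ b h) ?_
  rw [add_comm a' b, add_comm a' b']
  exact CE.add_right φ ψ a' h'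

/-- the closure of `≺` under the congruence. -/
inductive CR : T.carrier → T.carrier → Prop
  | base {x a b y : T.carrier} : CE φ ψ x a → T.rel a b → CE φ ψ b y → CR x y
  | trans {x y z : T.carrier} : CR x y → CR y z → CR x z

theorem CR.e_left {x' x y : T.carrier} (he : CE φ ψ x' x) (h : CR φ ψ x y) : CR φ ψ x' y := by
  induction h with
  | base h1 h2 h3 => exact CR.base (CE.trans' φ ψ he h1) h2 h3
  | trans h1 h2 ih1 ih2 => exact CR.trans (ih1 he) h2

theorem CR.e_right {x y y' : T.carrier} (h : CR φ ψ x y) (he : CE φ ψ y y') : CR φ ψ x y' := by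
  induction h with
  | base h1 h2 h3 => exact CR.base h1 h2 (CE.trans' φ ψ h3 he)
  | trans h1 h2 ih1 ih2 => exact CR.trans h1 (ih2 he)

/-- push a `≺` step through one congruence step. -/
theorem step_push {a m w : T.carrier} (h : T.rel a m) (hs : CStep φ ψ m w) :
    ∃ c, CR φ ψ a c ∧ T.rel c w := by
  obtain ⟨d, s, ⟨h1, h2⟩ | ⟨h1, h2⟩⟩ := hs
  · subst h1; subst h2
    obtain ⟨d', t, hd', ht, hat⟩ := T.ax.W4 h
    obtain ⟨s', hs', hts'⟩ := φ.2.cont s t ht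
    obtain ⟨d'', hd1, hd2⟩ := interp T.ax hd'
    have h1 : T.rel a (d'' + φ.1 s') := T.ax.trans hat (T.ax.W3 hd1 hts')
    refine ⟨d'' + ψ.1 s', CR.base (CE.refl' φ ψ a) h1
      (Relation.ReflTransGen.single ⟨d'', s', Or.inl ⟨rfl, rfl⟩⟩), ?_⟩
    exact T.ax.W3 hd2 (ψ.2.map_rel hs')
  · subst h1; subst h2
    obtain ⟨d', t, hd', ht, hat⟩ := T.ax.W4 h
    obtain ⟨s', hs', hts'⟩ := ψ.2.cont s t ht
    obtain ⟨d'', hd1, hd2⟩ := interp T.ax hd'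
    have h1 : T.rel a (d'' + ψ.1 s') := T.ax.trans hat (T.ax.W3 hd1 hts')
    refine ⟨d'' + φ.1 s', CR.base (CE.refl' φ ψ a) h1
      (Relation.ReflTransGen.single ⟨d'', s', Or.inr ⟨rfl, rfl⟩⟩), ?_⟩
    exact T.ax.W3 hd2 (φ.2.map_rel hs')

theorem push {a b w : T.carrier} (h : T.rel a b) (he : CE φ ψ b w) :
    ∃ c, (CE φ ψ a c ∨ CR φ ψ a c) ∧ T.rel c w := by
  induction he with
  | refl => exact ⟨a, Or.inl (CE.refl' φ ψ a), h⟩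
  | tail h1 h2 ih =>
      obtain ⟨c, hc, hcm⟩ := ih
      obtain ⟨c2, hc2, hc2w⟩ := step_push φ ψ hcm h2
      refine ⟨c2, Or.inr ?_, hc2w⟩
      rcases hc with hc | hc
      · exact CR.e_left φ ψ hc hc2
      · exact CR.trans hc hc2

theorem last_step {y x : T.carrier} (h : CR φ ψ y x) :
    ∃ c, (CE φ ψ y c ∨ CR φ ψ y c) ∧ T.rel c x := by
  induction h with
  | base h1 h2 h3 =>
      obtain ⟨c, hc, hcx⟩ := push φ ψ h2 h3
      refine ⟨c, ?_, hcx⟩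
      rcases hc with hc | hc
      · exact Or.inl (CE.trans' φ ψ h1 hc)
      · exact Or.inr (CR.e_left φ ψ h1 hc)
  | trans h1 h2 ih1 ih2 =>
      obtain ⟨c, hc, hcx⟩ := ih2
      refine ⟨c, Or.inr ?_, hcx⟩
      rcases hc with hc | hc
      · exact CR.e_right φ ψ h1 hc
      · exact CR.trans h1 hc

theorem rel_CR {x y : T.carrier} (h : T.rel x y) : CR φ ψ x y :=
  CR.base (CE.refl' φ ψ x) h (CE.refl' φ ψ y)

/-- an element related by (CE ∨ CR) to something `≺ w` is `CR`-below `w`. -/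
theorem or_rel {y c w : T.carrier} (h : CE φ ψ y c ∨ CR φ ψ y c) (hr : T.rel c w) :
    CR φ ψ y w := by
  rcases h with h | h
  · exact CR.base h hr (CE.refl' φ ψ w)
  · exact CR.trans h (rel_CR φ ψ hr)

theorem CR.add_rel {x y : T.carrier} (h : CR φ ψ x y) :
    ∀ {a b : T.carrier}, T.rel a b → CR φ ψ (x + a) (y + b) := by
  induction h with
  | base h1 h2 h3 =>
      intro a b hab
      exact CR.base (CE.add φ ψ h1 (CE.refl' φ ψ a)) (T.ax.W3 h2 hab)
        (CE.add φ ψ h3 (CE.refl' φ ψ b))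
  | trans h1 h2 ih1 ih2 =>
      intro a b hab
      obtain ⟨μ, h1', h2'⟩ := interp T.ax hab
      exact CR.trans (ih1 h1') (ih2 h2')

theorem CR.interp {x y : T.carrier} (h : CR φ ψ x y) : ∃ m, CR φ ψ x m ∧ CR φ ψ m y := by
  induction h with
  | base h1 h2 h3 =>
      rename_i x a b y
      obtain ⟨c, hc1, hc2⟩ := WCoeq.interp T.ax h2
      exact ⟨c, CR.base h1 hc1 (CE.refl' φ ψ c), CR.base (CE.refl' φ ψ c) hc2 h3⟩
  | trans h1 h2 _ _ => exact ⟨_, h1, h2⟩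

theorem CR.add {x' y' : T.carrier} (h' : CR φ ψ x' y') :
    ∀ {x y : T.carrier}, CR φ ψ x y → CR φ ψ (x + x') (y + y') := by
  induction h' with
  | base h1 h2 h3 =>
      intro x y h
      refine CR.e_left φ ψ (CE.add φ ψ (CE.refl' φ ψ x) h1)
        (CR.e_right φ ψ (CR.add_rel φ ψ h h2) (CE.add φ ψ (CE.refl' φ ψ y) h3))
  | trans h1 h2 ih1 ih2 =>
      intro x y h
      obtain ⟨m, hm1, hm2⟩ := CR.interp φ ψ h
      exact CR.trans (ih1 hm1) (ih2 hm2)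

end WCoeq

namespace WCoeq
variable {S T : WCat.{u}} (φ ψ : S ⟶ T)

def ceSetoid : Setoid T.carrier :=
  ⟨CE φ ψ, fun a => CE.refl' φ ψ a, fun h => CE.symm' φ ψ h, fun h h' => CE.trans' φ ψ h h'⟩

def LCar : Type u := Quotient (ceSetoid φ ψ)

def mkL (x : T.carrier) : LCar φ ψ := Quotient.mk (ceSetoid φ ψ) x

instance : Add (LCar φ ψ) :=
  ⟨Quotient.map₂ (· + ·) (fun _ _ h _ _ h' => CE.add φ ψ h h')⟩

instance : Zero (LCar φ ψ) := ⟨mkL φ ψ 0⟩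

instance : AddCommMonoid (LCar φ ψ) where
  add := (· + ·)
  zero := 0
  add_assoc := by
    rintro ⟨a⟩ ⟨b⟩ ⟨c⟩
    exact congrArg (mkL φ ψ) (add_assoc a b c)
  zero_add := by rintro ⟨a⟩; exact congrArg (mkL φ ψ) (zero_add a)
  add_zero := by rintro ⟨a⟩; exact congrArg (mkL φ ψ) (add_zero a)
  add_comm := by rintro ⟨a⟩ ⟨b⟩; exact congrArg (mkL φ ψ) (add_comm a b)
  nsmul := nsmulRec

theorem mkL_add (x y : T.carrier) : mkL φ ψ x + mkL φ ψ y = mkL φ ψ (x + y) := rfl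
theorem mkL_zero : (0 : LCar φ ψ) = mkL φ ψ 0 := rfl

def LRel (a b : LCar φ ψ) : Prop :=
  Quotient.liftOn₂ a b (CR φ ψ) (by
    intro a b a' b' ha hb
    refine propext ⟨fun h => ?_, fun h => ?_⟩
    · exact CR.e_right φ ψ (CR.e_left φ ψ (CE.symm' φ ψ ha) h) hb
    · exact CR.e_right φ ψ (CR.e_left φ ψ ha h) (CE.symm' φ ψ hb))

theorem LRel_mk {x y : T.carrier} : LRel φ ψ (mkL φ ψ x) (mkL φ ψ y) ↔ CR φ ψ x y := Iff.rfl

theorem L_ax : WAxioms (LCar φ ψ) (LRel φ ψ) := by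
  constructor
  · rintro ⟨x⟩ ⟨y⟩ ⟨z⟩ h h'
    exact CR.trans h h'
  · rintro ⟨x⟩
    exact rel_CR φ ψ (T.ax.zero_rel x)
  · rintro ⟨x⟩
    obtain ⟨s, hmono, hsx, hcof⟩ := T.ax.W1 x
    refine ⟨fun n => mkL φ ψ (s n), fun n => rel_CR φ ψ (hmono n),
      fun n => rel_CR φ ψ (hsx n), ?_⟩
    rintro ⟨y⟩ hy
    obtain ⟨c, hc, hcx⟩ := last_step φ ψ hy
    obtain ⟨n, hn⟩ := hcof c hcx
    exact ⟨n, or_rel φ ψ hc hn⟩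
  · rintro ⟨x'⟩ ⟨x⟩ ⟨y'⟩ ⟨y⟩ h h'
    exact CR.add φ ψ h' h
  · rintro ⟨x⟩ ⟨y⟩ ⟨z⟩ h
    obtain ⟨c, hc, hcx⟩ := last_step φ ψ (h : CR φ ψ x (y + z))
    obtain ⟨y', z', hy', hz', hc'⟩ := T.ax.W4 hcx
    exact ⟨mkL φ ψ y', mkL φ ψ z', rel_CR φ ψ hy', rel_CR φ ψ hz', or_rel φ ψ hc hc'⟩

def LObj : WCat.{u} := ⟨LCar φ ψ, LRel φ ψ, L_ax φ ψ⟩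

def ηhom : T ⟶ LObj φ ψ := by
  refine ⟨mkL φ ψ, rfl, fun _ _ => rfl, fun h => rel_CR φ ψ h, ?_⟩
  rintro t ⟨u⟩ hu
  obtain ⟨c, hc, hct⟩ := last_step φ ψ (hu : CR φ ψ u t)
  obtain ⟨m, hm1, hm2⟩ := interp T.ax hct
  exact ⟨m, hm2, or_rel φ ψ hc hm1⟩

end WCoeq

namespace WCoeq
variable {S T : WCat.{u}} (φ ψ : S ⟶ T)

theorem h_const {R : WCat.{u}} (h : T ⟶ R) (hco : φ ≫ h = ψ ≫ h)
    {x y : T.carrier} (he : CE φ ψ x y) : h.1 x = h.1 y := by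
  have hcof : ∀ s, h.1 (φ.1 s) = h.1 (ψ.1 s) := fun s =>
    congrFun (congrArg Subtype.val hco) s
  induction he with
  | refl => rfl
  | tail h1 h2 ih =>
      rw [ih]
      obtain ⟨c, s, ⟨e1, e2⟩ | ⟨e1, e2⟩⟩ := h2 <;> subst e1 <;> subst e2 <;>
        rw [h.2.map_add, h.2.map_add, hcof s]

theorem h_CR {R : WCat.{u}} (h : T ⟶ R) (hco : φ ≫ h = ψ ≫ h)
    {x y : T.carrier} (hr : CR φ ψ x y) : R.rel (h.1 x) (h.1 y) := by
  induction hr with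
  | base h1 h2 h3 =>
      rw [h_const φ ψ h hco h1, ← h_const φ ψ h hco h3]
      exact h.2.map_rel h2
  | trans h1 h2 ih1 ih2 => exact R.ax.trans ih1 ih2

end WCoeq

open WCoeq

/-- **The category W has coequalizers.** -/
theorem w_has_coequalizers (S T : WCat.{u}) (φ ψ : S ⟶ T) :
    ∃ (L : WCat.{u}) (η : T ⟶ L), φ ≫ η = ψ ≫ η ∧
      ∀ (R : WCat.{u}) (h : T ⟶ R), φ ≫ h = ψ ≫ h →
        ∃! k : L ⟶ R, η ≫ k = h := by
  refine ⟨LObj φ ψ, ηhom φ ψ, ?_, ?_⟩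
  · apply Subtype.ext; funext s
    exact Quotient.sound (Relation.ReflTransGen.single
      ⟨0, s, Or.inl ⟨(zero_add _).symm, (zero_add _).symm⟩⟩)
  · intro R h hco
    refine ⟨⟨Quotient.lift h.1 (fun a b he => h_const φ ψ h hco he), ?_, ?_, ?_, ?_⟩,
      ?_, ?_⟩
    · exact h.2.map_zero
    · rintro ⟨x⟩ ⟨y⟩
      exact h.2.map_add x y
    · rintro ⟨x⟩ ⟨y⟩ hr
      exact h_CR φ ψ h hco hr
    · rintro ⟨t⟩ ρ hρ
      obtain ⟨t', ht', hρ'⟩ := h.2.cont t ρ hρ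
      exact ⟨mkL φ ψ t', rel_CR φ ψ ht', hρ'⟩
    · apply Subtype.ext; funext t; rfl
    · rintro ⟨k, hk⟩ hke
      apply Subtype.ext; funext l
      induction l using Quotient.ind with
      | _ t => exact congrFun (congrArg Subtype.val hke) t
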